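/- Let n ≥ 2, 0 < p < 1, and let Q be the n×n matrix with entries Q_{ij} = ((1−p)/(1−p^n))·p^{((j−i−1) mod n)} for i,j ∈ {1,...,n}. Let {V^{(h)}}_{h≥1} be a homogeneous Markov chain on n states with transition matrix Q and arbitrary initial probability vector π^{(0)}, and let π^{(h)} denote the probability vector of the marginal distribution of V^{(h)}. Then π^{(h)} converges to the uniform vector π^{(∞)} = (1/n, ..., 1/n) as h → ∞, and for all h ≥ 0 it holds that ‖π^{(h)} − π^{(∞)}‖₁ ≤ √n · |λ₁|^h, where |λ₁| = (1−p)/√(1 + p² − 2p·cos(2π/n)). -/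

import Mathlib

open Filter Finset


noncomputable def omg (n : ℕ) : ℂ := Complex.exp (2 * Real.pi * Complex.I / n)

lemma omg_ne_zero (n : ℕ) : omg n ≠ 0 := Complex.exp_ne_zero _

lemma omg_pow_n {n : ℕ} (hn : 0 < n) : omg n ^ n = 1 := by
  rw [omg, ← Complex.exp_nat_mul, mul_div_cancel₀, Complex.exp_two_pi_mul_I]
  exact_mod_cast Nat.cast_ne_zero.mpr hn.ne'

lemma omg_zpow_eq_one_iff {n : ℕ} (hn : 0 < n) (m : ℤ) :
    omg n ^ m = 1 ↔ (n : ℤ) ∣ m := by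
  have hne : (n : ℂ) ≠ 0 := Nat.cast_ne_zero.mpr hn.ne'
  rw [omg, ← Complex.exp_int_mul, Complex.exp_eq_one_iff]
  constructor
  · rintro ⟨k, hk⟩
    refine ⟨k, ?_⟩
    have h2 : (2 * Real.pi * Complex.I) ≠ 0 := by
      simp [Real.pi_ne_zero, Complex.I_ne_zero]
    have : (m : ℂ) = n * k := by
      field_simp at hk
      have hk' : (m : ℂ) * (2 * Real.pi * Complex.I) = (n * k) * (2 * Real.pi * Complex.I) := by
        rw [hk]
      rcases mul_eq_mul_right_iff.mp hk' with h | h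
      · exact h
      · exact absurd h h2
    exact_mod_cast this
  · rintro ⟨k, rfl⟩
    exact ⟨k, by field_simp; push_cast; ring⟩

lemma omg_sum_zpow {n : ℕ} (hn : 0 < n) (m : ℤ) (hm : ¬ (n : ℤ) ∣ m) :
    ∑ k : Fin n, omg n ^ (m * (k : ℕ)) = 0 := by
  have hζ : omg n ^ m ≠ 1 := fun h => hm ((omg_zpow_eq_one_iff hn m).mp h)
  have hrw : ∀ k : Fin n, omg n ^ (m * (k : ℕ)) = (omg n ^ m) ^ (k : ℕ) := by
    intro k; rw [zpow_mul, zpow_natCast]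
  simp_rw [hrw]
  rw [Fin.sum_univ_eq_sum_range, geom_sum_eq hζ]
  have : (omg n ^ m) ^ n = 1 := by
    rw [← zpow_natCast, ← zpow_mul, mul_comm, zpow_mul, zpow_natCast, omg_pow_n hn, one_zpow]
  rw [this, sub_self, zero_div]

lemma omg_pow_mod {n : ℕ} (hn : 0 < n) (a : ℕ) : omg n ^ (a % n) = omg n ^ a := by
  conv_rhs => rw [← Nat.div_add_mod a n, pow_add, pow_mul, omg_pow_n hn, one_pow, one_mul]

lemma omg_pow_congr {n : ℕ} (hn : 0 < n) {a b : ℕ} (h : a % n = b % n) :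
    omg n ^ a = omg n ^ b := by
  rw [← omg_pow_mod hn a, ← omg_pow_mod hn b, h]

noncomputable def dft (n : ℕ) (w : Fin n → ℝ) (k : ℕ) : ℂ :=
  ∑ j : Fin n, (w j : ℂ) * omg n ^ ((j : ℕ) * k)

noncomputable def mul1 (n : ℕ) (p : ℝ) (k : ℕ) : ℂ :=
  (((1 - p) / (1 - p ^ n) : ℝ) : ℂ) * omg n ^ k *
    ∑ e ∈ Finset.range n, ((p : ℂ) * omg n ^ k) ^ e

lemma dft_vecMul {n : ℕ} (hn : 2 ≤ n) (p : ℝ)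
    (Q : Matrix (Fin n) (Fin n) ℝ)
    (hQ : ∀ i j : Fin n,
      Q i j = ((1 - p) / (1 - p ^ n)) * p ^ ((((j : ℤ) - (i : ℤ) - 1) % (n : ℤ)).toNat))
    (v : Fin n → ℝ) (k : ℕ) :
    dft n (Matrix.vecMul v Q) k = mul1 n p k * dft n v k := by
  haveI : NeZero n := ⟨by omega⟩
  have hn0 : 0 < n := by omega
  have key : ∀ i : Fin n, ∑ j : Fin n, (Q i j : ℂ) * omg n ^ ((j : ℕ) * k)
      = mul1 n p k * omg n ^ ((i : ℕ) * k) := by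
    intro i
    have hval : ∀ e : Fin n, ((i + 1 + e : Fin n) : ℕ) = (↑i + 1 + ↑e) % n := by
      intro e
      simp [Fin.add_def, Fin.val_one', Nat.mod_add_mod, Nat.one_mod_eq_one.mpr (by omega : n ≠ 1)]
    have hexp : ∀ e : Fin n,
        (((((i + 1 + e : Fin n) : ℤ) - (i : ℤ) - 1) % (n : ℤ)).toNat) = (e : ℕ) := by
      intro e
      have h1 : (((i + 1 + e : Fin n) : ℤ) - (i : ℤ) - 1) % (n : ℤ) = (e : ℕ) := by
        have hmod : ((((↑i + 1 + ↑e) % n : ℕ) : ℤ) - (i : ℤ) - 1) % (n : ℤ)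
            = (((↑i + 1 + ↑e : ℕ) : ℤ) - (i : ℤ) - 1) % (n : ℤ) := by
          rw [sub_sub, sub_sub]
          have hb : (((↑i + 1 + ↑e : ℕ) : ℤ) % n) ≡ ((↑i + 1 + ↑e : ℕ) : ℤ) [ZMOD n] :=
            Int.emod_emod_of_dvd _ dvd_rfl
          have := hb.sub_right ((i : ℤ) + 1)
          rw [Int.natCast_mod]
          exact this
        rw [hval e, hmod]
        have : (((↑i + 1 + ↑e : ℕ) : ℤ) - (i : ℤ) - 1) = ((e : ℕ) : ℤ) := by push_cast; ring
        rw [this, Int.emod_eq_of_lt (by positivity) (by exact_mod_cast e.isLt)]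
      rw [h1, Int.toNat_natCast]
    have homg : ∀ e : Fin n, omg n ^ (((i + 1 + e : Fin n) : ℕ) * k)
        = omg n ^ ((↑i * k)) * omg n ^ k * (omg n ^ k) ^ (e : ℕ) := by
      intro e
      have : omg n ^ (((i + 1 + e : Fin n) : ℕ) * k) = omg n ^ ((↑i + 1 + ↑e) * k) := by
        apply omg_pow_congr hn0
        rw [hval e]
        exact (Nat.mod_modEq _ n).mul_right k
      rw [this, ← pow_mul, ← pow_add, ← pow_add]
      congr 1
      ring
    calc ∑ j : Fin n, (Q i j : ℂ) * omg n ^ ((j : ℕ) * k)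
        = ∑ e : Fin n, (Q i (i + 1 + e) : ℂ) * omg n ^ (((i + 1 + e : Fin n) : ℕ) * k) := by
          exact (Fintype.sum_equiv (Equiv.addLeft (i + 1)) _ _ (fun e => rfl)).symm
      _ = ∑ e : Fin n, (((1 - p) / (1 - p ^ n) : ℝ) : ℂ) * (p : ℂ) ^ (e : ℕ) *
            (omg n ^ ((↑i * k)) * omg n ^ k * (omg n ^ k) ^ (e : ℕ)) := by
          refine Finset.sum_congr rfl fun e _ => ?_
          rw [hQ, hexp e, homg e]; push_cast; ring
      _ = mul1 n p k * omg n ^ ((i : ℕ) * k) := by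
          rw [mul1, ← Fin.sum_univ_eq_sum_range (fun e => ((p : ℂ) * omg n ^ k) ^ e),
            Finset.mul_sum, Finset.sum_mul]
          refine Finset.sum_congr rfl fun e _ => ?_
          rw [mul_pow]; ring
  calc dft n (Matrix.vecMul v Q) k
      = ∑ j : Fin n, (∑ i : Fin n, (v i : ℂ) * (Q i j : ℂ)) * omg n ^ ((j : ℕ) * k) := by
        unfold dft
        refine Finset.sum_congr rfl fun j _ => ?_
        simp [Matrix.vecMul, dotProduct]
    _ = ∑ i : Fin n, (v i : ℂ) * ∑ j : Fin n, (Q i j : ℂ) * omg n ^ ((j : ℕ) * k) := by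
        simp_rw [Finset.sum_mul]
        rw [Finset.sum_comm]
        simp_rw [Finset.mul_sum, mul_assoc]
    _ = mul1 n p k * dft n v k := by
        simp_rw [key]
        rw [dft, Finset.mul_sum]
        refine Finset.sum_congr rfl fun i _ => by ring

lemma omg_conj (n : ℕ) : (starRingEnd ℂ) (omg n) = (omg n)⁻¹ := by
  rw [omg, ← Complex.exp_conj, ← Complex.exp_neg]
  congr 1
  simp [map_div₀]
  norm_num [Complex.ext_iff]
  ring

lemma parseval {n : ℕ} (hn : 2 ≤ n) (w : Fin n → ℝ) :
    ∑ k : Fin n, Complex.normSq (dft n w (k : ℕ)) = n * ∑ j, (w j) ^ 2 := by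
  have hn0 : 0 < n := by omega
  have hC : ∑ k : Fin n, (dft n w (k : ℕ) * (starRingEnd ℂ) (dft n w (k : ℕ)))
      = (n : ℂ) * ∑ j : Fin n, ((w j : ℂ)) ^ 2 := by
    have hconj : ∀ k : ℕ, (starRingEnd ℂ) (dft n w k)
        = ∑ j : Fin n, (w j : ℂ) * omg n ^ (-(((j : ℕ) * k : ℕ) : ℤ)) := by
      intro k
      rw [dft, map_sum]
      refine Finset.sum_congr rfl fun j _ => ?_
      rw [map_mul, Complex.conj_ofReal, map_pow, omg_conj, inv_pow, ← zpow_natCast,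
        ← zpow_neg]
    calc ∑ k : Fin n, (dft n w (k : ℕ) * (starRingEnd ℂ) (dft n w (k : ℕ)))
        = ∑ k : Fin n, ∑ j : Fin n, ∑ j' : Fin n,
            (w j : ℂ) * (w j' : ℂ) * omg n ^ ((((j : ℕ) : ℤ) - ((j' : ℕ) : ℤ)) * ((k : ℕ) : ℤ)) := by
          refine Finset.sum_congr rfl fun k _ => ?_
          rw [hconj, dft, Finset.sum_mul_sum]
          refine Finset.sum_congr rfl fun j _ => Finset.sum_congr rfl fun j' _ => ?_
          rw [mul_mul_mul_comm, ← zpow_natCast (omg n) ((j : ℕ) * k),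
            ← zpow_add₀ (omg_ne_zero n)]
          congr 1
          push_cast
          ring
      _ = ∑ j : Fin n, ∑ j' : Fin n, (w j : ℂ) * (w j' : ℂ) *
            ∑ k : Fin n, omg n ^ ((((j : ℕ) : ℤ) - ((j' : ℕ) : ℤ)) * ((k : ℕ) : ℤ)) := by
          rw [Finset.sum_comm]
          refine Finset.sum_congr rfl fun j _ => ?_
          rw [Finset.sum_comm]
          refine Finset.sum_congr rfl fun j' _ => ?_
          rw [Finset.mul_sum]
      _ = ∑ j : Fin n, ((w j : ℂ)) ^ 2 * (n : ℂ) := by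
          refine Finset.sum_congr rfl fun j _ => ?_
          rw [Finset.sum_eq_single j]
          · simp [sq]
          · intro j' _ hj'
            have hne : (((j : ℕ) : ℤ) - ((j' : ℕ) : ℤ)) ≠ 0 := by
              intro h
              apply hj'
              have : ((j' : ℕ) : ℤ) = ((j : ℕ) : ℤ) := by omega
              exact Fin.ext (by exact_mod_cast this)
            have hnd : ¬ ((n : ℤ) ∣ (((j : ℕ) : ℤ) - ((j' : ℕ) : ℤ))) := by
              intro hd
              apply hne
              refine Int.eq_zero_of_abs_lt_dvd hd ?_
              have h1 : ((j : ℕ) : ℤ) < n := by exact_mod_cast j.isLt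
              have h2 : ((j' : ℕ) : ℤ) < n := by exact_mod_cast j'.isLt
              have h3 : 0 ≤ ((j : ℕ) : ℤ) := by positivity
              have h4 : 0 ≤ ((j' : ℕ) : ℤ) := by positivity
              rw [abs_sub_lt_iff]
              omega
            rw [omg_sum_zpow hn0 _ hnd, mul_zero]
          · intro hj; exact absurd (Finset.mem_univ j) hj
      _ = (n : ℂ) * ∑ j : Fin n, ((w j : ℂ)) ^ 2 := by
          rw [Finset.mul_sum]
          exact Finset.sum_congr rfl fun j _ => mul_comm _ _
  have hL : ∑ k : Fin n, (dft n w (k : ℕ) * (starRingEnd ℂ) (dft n w (k : ℕ)))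
      = ((∑ k : Fin n, Complex.normSq (dft n w (k : ℕ)) : ℝ) : ℂ) := by
    push_cast
    exact Finset.sum_congr rfl fun k _ => Complex.mul_conj _
  have hR : ((n * ∑ j, (w j) ^ 2 : ℝ) : ℂ) = (n : ℂ) * ∑ j : Fin n, ((w j : ℂ)) ^ 2 := by
    push_cast
    ring
  have := hL.symm.trans (hC.trans hR.symm)
  exact_mod_cast this

lemma cos_le_aux {n k : ℕ} (hn : 2 ≤ n) (hk1 : 1 ≤ k) (hk2 : 2 * k ≤ n) :
    Real.cos (2 * Real.pi * k / n) ≤ Real.cos (2 * Real.pi / n) := by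
  have hpi := Real.pi_pos
  have hn0 : (0 : ℝ) < n := by positivity
  have hk : (1 : ℝ) ≤ k := by exact_mod_cast hk1
  have h2k : (2 * k : ℝ) ≤ n := by exact_mod_cast hk2
  apply Real.cos_le_cos_of_nonneg_of_le_pi
  · positivity
  · rw [div_le_iff₀ hn0]; nlinarith
  · rw [show 2 * Real.pi / (n : ℝ) = 2 * Real.pi * 1 / n by ring]
    gcongr

lemma cos_le {n k : ℕ} (hn : 2 ≤ n) (hk1 : 1 ≤ k) (hk2 : k < n) :
    Real.cos (2 * Real.pi * k / n) ≤ Real.cos (2 * Real.pi / n) := by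
  have hpi := Real.pi_pos
  have hn0 : (0 : ℝ) < n := by positivity
  rcases le_or_gt (2 * k) n with h | h
  · exact cos_le_aux hn hk1 h
  · have hm1 : 1 ≤ n - k := by omega
    have hm2 : 2 * (n - k) ≤ n := by omega
    have hcast : (2 * Real.pi * k / n) = 2 * Real.pi - 2 * Real.pi * ((n - k : ℕ) : ℝ) / n := by
      have hnk : ((n - k : ℕ) : ℝ) = (n : ℝ) - k := by
        push_cast [Nat.cast_sub hk2.le]; ring
      rw [hnk]
      field_simp
      ring
    rw [hcast, Real.cos_two_pi_sub]
    exact cos_le_aux hn hm1 hm2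

lemma mul1_zero {n : ℕ} (hn : 2 ≤ n) {p : ℝ} (hp0 : 0 < p) (hp1 : p < 1) :
    mul1 n p 0 = 1 := by
  have hpn : p ^ n < 1 := pow_lt_one₀ hp0.le hp1 (by omega)
  have hp' : (p : ℂ) ≠ 1 := by
    intro h; exact hp1.ne (by exact_mod_cast h)
  rw [mul1, pow_zero, mul_one]
  simp only [mul_one]
  rw [geom_sum_eq hp']
  have h1 : (1 : ℂ) - (p : ℂ) ≠ 0 := by
    intro h; apply hp1.ne; have : (p : ℂ) = 1 := by linear_combination -h
    exact_mod_cast this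
  have h2 : (1 : ℂ) - (p : ℂ) ^ n ≠ 0 := by
    intro h; apply hpn.ne; have : (p : ℂ) ^ n = 1 := by linear_combination -h
    exact_mod_cast this
  push_cast
  rw [div_mul_div_comm, div_eq_one_iff_eq (mul_ne_zero h2 (by
    intro h; apply h1; linear_combination -h))]
  ring

lemma abs_one_sub_p_omg {n : ℕ} (hn : 2 ≤ n) (p : ℝ) (k : ℕ) :
    ‖(1 - (p : ℂ) * omg n ^ k)‖
      = Real.sqrt (1 + p ^ 2 - 2 * p * Real.cos (2 * Real.pi * k / n)) := by
  have hωk : omg n ^ k = Complex.exp (((2 * Real.pi * k / n : ℝ) : ℂ) * Complex.I) := by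
    rw [omg, ← Complex.exp_nat_mul]
    congr 1
    push_cast
    ring
  rw [Complex.norm_def]
  congr 1
  set θ : ℝ := 2 * Real.pi * k / n
  rw [hωk, Complex.normSq_apply]
  simp [Complex.exp_ofReal_mul_I_re, Complex.exp_ofReal_mul_I_im]
  nlinarith [Real.sin_sq_add_cos_sq θ]

lemma mul1_abs_le {n : ℕ} (hn : 2 ≤ n) {p : ℝ} (hp0 : 0 < p) (hp1 : p < 1)
    {k : ℕ} (hk1 : 1 ≤ k) (hk2 : k < n) :
    ‖(mul1 n p k)‖
      ≤ (1 - p) / Real.sqrt (1 + p ^ 2 - 2 * p * Real.cos (2 * Real.pi / n)) := by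
  have hn0 : 0 < n := by omega
  have hpn : p ^ n < 1 := pow_lt_one₀ hp0.le hp1 (by omega)
  have habsωk : ‖(omg n ^ k)‖ = 1 := by
    rw [omg, ← Complex.exp_nat_mul, Complex.norm_exp]
    have : ((k : ℂ) * (2 * Real.pi * Complex.I / n)).re = 0 := by
      simp [Complex.div_re, Complex.mul_re]
    rw [this, Real.exp_zero]
  have hne : (p : ℂ) * omg n ^ k ≠ 1 := by
    intro h
    have := congrArg (‖·‖) h
    rw [norm_mul, Complex.norm_real, Real.norm_eq_abs, habsωk, mul_one, abs_of_pos hp0, norm_one] at this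
    exact hp1.ne this
  have hpow : ((p : ℂ) * omg n ^ k) ^ n = (p : ℂ) ^ n := by
    rw [mul_pow, ← pow_mul, mul_comm k n, pow_mul, omg_pow_n hn0, one_pow, mul_one]
  have hG : ∑ e ∈ Finset.range n, ((p : ℂ) * omg n ^ k) ^ e
      = ((p : ℂ) ^ n - 1) / ((p : ℂ) * omg n ^ k - 1) := by
    rw [geom_sum_eq hne, hpow]
  have habs : ‖(mul1 n p k)‖
      = (1 - p) / Real.sqrt (1 + p ^ 2 - 2 * p * Real.cos (2 * Real.pi * k / n)) := by
    rw [mul1, hG, norm_mul, norm_mul, norm_div, Complex.norm_real, Real.norm_eq_abs, habsωk, mul_one]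
    have h1 : ‖((p : ℂ) ^ n - 1)‖ = 1 - p ^ n := by
      rw [show ((p : ℂ) ^ n - 1) = (((p ^ n - 1 : ℝ)) : ℂ) by push_cast; ring,
        Complex.norm_real, Real.norm_eq_abs, abs_of_neg (by linarith)]
      ring
    have h2 : ‖((p : ℂ) * omg n ^ k - 1)‖
        = Real.sqrt (1 + p ^ 2 - 2 * p * Real.cos (2 * Real.pi * k / n)) := by
      rw [show ((p : ℂ) * omg n ^ k - 1) = -(1 - (p : ℂ) * omg n ^ k) by ring,
        norm_neg, abs_one_sub_p_omg hn p k]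
    rw [h1, h2, abs_of_pos (div_pos (by linarith) (by linarith))]
    rw [div_mul_div_comm, show (1 - p) * (1 - p ^ n) = (1 - p ^ n) * (1 - p) from mul_comm _ _,
      mul_div_mul_left _ _ (by linarith : (1 : ℝ) - p ^ n ≠ 0)]
  rw [habs]
  have hD0 : (1 - p) ^ 2 ≤ 1 + p ^ 2 - 2 * p * Real.cos (2 * Real.pi / n) := by
    nlinarith [Real.cos_le_one (2 * Real.pi / n)]
  have hD0pos : 0 < 1 + p ^ 2 - 2 * p * Real.cos (2 * Real.pi / n) := by
    nlinarith
  have hle := cos_le hn hk1 hk2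
  apply div_le_div_of_nonneg_left (by linarith) (Real.sqrt_pos.mpr hD0pos)
  exact Real.sqrt_le_sqrt (by nlinarith)

lemma lam1_lt_one {n : ℕ} (hn : 2 ≤ n) {p : ℝ} (hp0 : 0 < p) (hp1 : p < 1) :
    (1 - p) / Real.sqrt (1 + p ^ 2 - 2 * p * Real.cos (2 * Real.pi / n)) < 1 := by
  have hpi := Real.pi_pos
  have hn0 : (0 : ℝ) < n := by positivity
  have hx1 : 0 < 2 * Real.pi / n := by positivity
  have hx2 : 2 * Real.pi / n < 2 * Real.pi := by
    rw [div_lt_iff₀ hn0]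
    have h2 : (2 : ℝ) ≤ n := by exact_mod_cast hn
    nlinarith [mul_le_mul_of_nonneg_left h2 (by positivity : (0:ℝ) ≤ 2 * Real.pi)]
  have hcos : Real.cos (2 * Real.pi / n) < 1 := by
    rcases lt_or_eq_of_le (Real.cos_le_one (2 * Real.pi / n)) with h | h
    · exact h
    · exfalso
      have := (Real.cos_eq_one_iff_of_lt_of_lt (by linarith) hx2).mp h
      linarith
  have hD : (1 - p) ^ 2 < 1 + p ^ 2 - 2 * p * Real.cos (2 * Real.pi / n) := by nlinarith
  have hs : 1 - p < Real.sqrt (1 + p ^ 2 - 2 * p * Real.cos (2 * Real.pi / n)) := by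
    have := Real.sqrt_lt_sqrt (by positivity) hD
    rwa [Real.sqrt_sq (by linarith)] at this
  rw [div_lt_one (by linarith)]
  exact hs
/-- Mixing of the Skip-Ring Markov chain: with transition matrix
`Q i j = ((1−p)/(1−pⁿ))·p^((j−i−1) mod n)` (0-indexed), the marginal distributions
`π⁽ʰ⁾ = π⁽⁰⁾ Qʰ` converge to uniform, and
`‖π⁽ʰ⁾ − π⁽∞⁾‖₁ ≤ √n · |lam1|ʰ` with `|lam1| = (1−p)/√(1+p²−2p·cos(2π/n))`. -/
theorem skip_ring_markov_chain_mixing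
    (n : ℕ) (hn : 2 ≤ n) (p : ℝ) (hp0 : 0 < p) (hp1 : p < 1)
    (Q : Matrix (Fin n) (Fin n) ℝ)
    (hQ : ∀ i j : Fin n,
      Q i j = ((1 - p) / (1 - p ^ n)) * p ^ ((((j : ℤ) - (i : ℤ) - 1) % (n : ℤ)).toNat))
    (π0 : Fin n → ℝ) (hπ0nonneg : ∀ i, 0 ≤ π0 i) (hπ0sum : ∑ i, π0 i = 1)
    (π : ℕ → Fin n → ℝ) (hπ : ∀ h, π h = Matrix.vecMul π0 (Q ^ h))
    (lam1 : ℝ)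
    (hlam1 : lam1 = (1 - p) / Real.sqrt (1 + p ^ 2 - 2 * p * Real.cos (2 * Real.pi / n))) :
    Tendsto π atTop (nhds (fun _ => 1 / (n : ℝ))) ∧
      ∀ h : ℕ, ∑ i, |π h i - 1 / (n : ℝ)| ≤ Real.sqrt n * lam1 ^ h := by
  haveI : NeZero n := ⟨by omega⟩
  have hn0 : 0 < n := by omega
  have hnR : (0 : ℝ) < n := by exact_mod_cast hn0
  have hD0 : (1 - p) ^ 2 ≤ 1 + p ^ 2 - 2 * p * Real.cos (2 * Real.pi / n) := by
    nlinarith [Real.cos_le_one (2 * Real.pi / n)]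
  have hD0pos : 0 < 1 + p ^ 2 - 2 * p * Real.cos (2 * Real.pi / n) := by nlinarith
  have hlam_nonneg : 0 ≤ lam1 := by
    rw [hlam1]
    exact div_nonneg (by linarith) (Real.sqrt_nonneg _)
  have hlam_lt : lam1 < 1 := by rw [hlam1]; exact lam1_lt_one hn hp0 hp1
  have hπ00 : π 0 = π0 := by rw [hπ 0, pow_zero, Matrix.vecMul_one]
  have hd0 : ∀ v : Fin n → ℝ, dft n v 0 = ((∑ i, v i : ℝ) : ℂ) := by
    intro v; rw [dft]; push_cast; simp
  have hrec : ∀ h k, dft n (π (h + 1)) k = mul1 n p k * dft n (π h) k := by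
    intro h k
    have hstep : π (h + 1) = Matrix.vecMul (π h) Q := by
      rw [hπ, hπ, pow_succ, ← Matrix.vecMul_vecMul]
    rw [hstep]
    exact dft_vecMul hn p Q hQ (π h) k
  have hdft : ∀ h k, dft n (π h) k = mul1 n p k ^ h * dft n π0 k := by
    intro h
    induction h with
    | zero => intro k; rw [pow_zero, one_mul, hπ00]
    | succ m ih => intro k; rw [hrec m k, ih k, pow_succ]; ring
  have hsum : ∀ h, ∑ i, π h i = 1 := by
    intro h
    have h1 : dft n (π h) 0 = dft n π0 0 := by
      rw [hdft h 0, mul1_zero hn hp0 hp1, one_pow, one_mul]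
    rw [hd0, hd0] at h1
    have h2 : (∑ i, π h i : ℝ) = (∑ i, π0 i : ℝ) := by exact_mod_cast h1
    rw [h2, hπ0sum]
  have hzero : ∀ k : Fin n, k ≠ 0 → ∑ j : Fin n, omg n ^ ((j : ℕ) * (k : ℕ)) = 0 := by
    intro k hk
    have hkv : (k : ℕ) ≠ 0 := by intro h0; apply hk; ext; simp [h0]
    have hnd : ¬ ((n : ℤ) ∣ ((k : ℕ) : ℤ)) := by
      rw [Int.natCast_dvd_natCast]
      intro hdvd
      have := Nat.le_of_dvd (Nat.pos_of_ne_zero hkv) hdvd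
      have := k.isLt
      omega
    have h0 := omg_sum_zpow hn0 ((k : ℕ) : ℤ) hnd
    rw [← h0]
    refine Finset.sum_congr rfl fun j _ => ?_
    rw [← zpow_natCast (omg n) ((j : ℕ) * (k : ℕ))]
    congr 1
    push_cast
    ring
  have hdfw : ∀ (v : Fin n → ℝ) (k : Fin n), k ≠ 0 →
      dft n (fun i => v i - 1 / (n : ℝ)) (k : ℕ) = dft n v (k : ℕ) := by
    intro v k hk
    rw [dft, dft]
    have hterm : ∀ j : Fin n, ((v j - 1 / (n : ℝ) : ℝ) : ℂ) * omg n ^ ((j : ℕ) * (k : ℕ))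
        = (v j : ℂ) * omg n ^ ((j : ℕ) * (k : ℕ))
          - ((1 / (n : ℝ) : ℝ) : ℂ) * omg n ^ ((j : ℕ) * (k : ℕ)) := by
      intro j; push_cast; ring
    simp_rw [hterm]
    rw [Finset.sum_sub_distrib, ← Finset.mul_sum, hzero k hk, mul_zero, sub_zero]
  have hdfw0 : ∀ h, dft n (fun i => π h i - 1 / (n : ℝ)) 0 = 0 := by
    intro h
    rw [hd0]
    have hs : ∑ i : Fin n, (π h i - 1 / (n : ℝ)) = 0 := by
      rw [Finset.sum_sub_distrib, hsum h, Finset.sum_const, Finset.card_univ, Fintype.card_fin]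
      rw [nsmul_eq_mul]; field_simp; ring
    rw [hs, Complex.ofReal_zero]
  have habsμ : ∀ k : Fin n, k ≠ 0 → ‖(mul1 n p (k : ℕ))‖ ≤ lam1 := by
    intro k hk
    rw [hlam1]
    have hkv : 1 ≤ (k : ℕ) := Nat.pos_of_ne_zero (by intro h0; apply hk; ext; simp [h0])
    exact mul1_abs_le hn hp0 hp1 hkv k.isLt
  have hL2 : ∀ h, ∑ i, (π h i - 1 / (n : ℝ)) ^ 2
      ≤ (lam1 ^ h) ^ 2 * ∑ i, (π0 i - 1 / (n : ℝ)) ^ 2 := by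
    intro h
    have hP1 := parseval hn (fun i => π h i - 1 / (n : ℝ))
    have hP2 := parseval hn (fun i => π0 i - 1 / (n : ℝ))
    have hterm : ∀ k : Fin n,
        Complex.normSq (dft n (fun i => π h i - 1 / (n : ℝ)) (k : ℕ))
        ≤ (lam1 ^ h) ^ 2 * Complex.normSq (dft n (fun i => π0 i - 1 / (n : ℝ)) (k : ℕ)) := by
      intro k
      by_cases hk : k = 0
      · subst hk
        rw [show ((0 : Fin n) : ℕ) = 0 from rfl, hdfw0 h, map_zero]
        exact mul_nonneg (by positivity) (Complex.normSq_nonneg _)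
      · have e1 : dft n (fun i => π h i - 1 / (n : ℝ)) (k : ℕ)
            = mul1 n p (k : ℕ) ^ h * dft n (fun i => π0 i - 1 / (n : ℝ)) (k : ℕ) := by
          rw [hdfw (π h) k hk, hdft h, ← hdfw π0 k hk]
        rw [e1, map_mul, map_pow]
        apply mul_le_mul_of_nonneg_right ?_ (Complex.normSq_nonneg _)
        have h1 : Complex.normSq (mul1 n p (k : ℕ)) ≤ lam1 ^ 2 := by
          rw [← Complex.sq_norm]
          exact pow_le_pow_left₀ (norm_nonneg _) (habsμ k hk) 2
        calc Complex.normSq (mul1 n p (k : ℕ)) ^ h ≤ (lam1 ^ 2) ^ h :=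
              pow_le_pow_left₀ (Complex.normSq_nonneg _) h1 h
          _ = (lam1 ^ h) ^ 2 := by rw [← pow_mul, ← pow_mul, mul_comm]
    have hsum' := Finset.sum_le_sum (s := Finset.univ) (fun k _ => hterm k)
    rw [hP1] at hsum'
    rw [← Finset.mul_sum, hP2] at hsum'
    rw [show (lam1 ^ h) ^ 2 * ((n : ℝ) * ∑ i, (π0 i - 1 / (n : ℝ)) ^ 2)
      = (n : ℝ) * ((lam1 ^ h) ^ 2 * ∑ i, (π0 i - 1 / (n : ℝ)) ^ 2) by ring] at hsum'
    exact le_of_mul_le_mul_left hsum' hnR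
  have hW0 : ∑ i, (π0 i - 1 / (n : ℝ)) ^ 2 ≤ 1 := by
    have hsq : ∑ i, (π0 i) ^ 2 ≤ 1 := by
      have := Finset.sum_sq_le_sq_sum_of_nonneg (fun i (_ : i ∈ Finset.univ) => hπ0nonneg i)
      rwa [hπ0sum, one_pow] at this
    have hexp : ∑ i, (π0 i - 1 / (n : ℝ)) ^ 2
        = (∑ i, (π0 i) ^ 2) - 2 * (1 / (n : ℝ)) * (∑ i, π0 i)
          + (n : ℝ) * (1 / (n : ℝ)) ^ 2 := by
      rw [Finset.mul_sum, ← Finset.sum_sub_distrib]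
      rw [show (n : ℝ) * (1 / (n : ℝ)) ^ 2 = ∑ _i : Fin n, (1 / (n : ℝ)) ^ 2 by
        rw [Finset.sum_const, Finset.card_univ, Fintype.card_fin]; ring]
      rw [← Finset.sum_add_distrib]
      exact Finset.sum_congr rfl fun i _ => by ring
    rw [hexp, hπ0sum]
    have h1n : 0 < 1 / (n : ℝ) := by positivity
    have : (n : ℝ) * (1 / (n : ℝ)) ^ 2 = 1 / (n : ℝ) := by field_simp
    rw [this]
    linarith
  have hl1 : ∀ h : ℕ, ∑ i, |π h i - 1 / (n : ℝ)| ≤ Real.sqrt n * lam1 ^ h := by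
    intro h
    have hcs := Finset.sum_mul_sq_le_sq_mul_sq Finset.univ
      (fun i => |π h i - 1 / (n : ℝ)|) (fun _ => (1 : ℝ))
    simp only [mul_one, one_pow, sq_abs] at hcs
    have hcs' : (∑ i, |π h i - 1 / (n : ℝ)|) ^ 2 ≤ (n : ℝ) * (lam1 ^ h) ^ 2 := by
      calc (∑ i, |π h i - 1 / (n : ℝ)|) ^ 2
          ≤ (∑ i, (π h i - 1 / (n : ℝ)) ^ 2) * ∑ _i : Fin n, (1 : ℝ) := hcs
        _ = (∑ i, (π h i - 1 / (n : ℝ)) ^ 2) * (n : ℝ) := by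
            rw [Finset.sum_const, Finset.card_univ, Fintype.card_fin]; simp
        _ ≤ ((lam1 ^ h) ^ 2 * 1) * (n : ℝ) := by
            have := (hL2 h).trans (by
              have := mul_le_mul_of_nonneg_left hW0 (by positivity : (0:ℝ) ≤ (lam1 ^ h) ^ 2)
              exact this)
            apply mul_le_mul_of_nonneg_right _ hnR.le
            simpa using this
        _ = (n : ℝ) * (lam1 ^ h) ^ 2 := by ring
    have hrhs : (n : ℝ) * (lam1 ^ h) ^ 2 = (Real.sqrt n * lam1 ^ h) ^ 2 := by
      rw [mul_pow, Real.sq_sqrt hnR.le]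
    rw [hrhs] at hcs'
    have hL : 0 ≤ ∑ i, |π h i - 1 / (n : ℝ)| :=
      Finset.sum_nonneg fun i _ => abs_nonneg _
    have hR : 0 ≤ Real.sqrt n * lam1 ^ h := by positivity
    calc ∑ i, |π h i - 1 / (n : ℝ)|
        = Real.sqrt ((∑ i, |π h i - 1 / (n : ℝ)|) ^ 2) := (Real.sqrt_sq hL).symm
      _ ≤ Real.sqrt ((Real.sqrt n * lam1 ^ h) ^ 2) := Real.sqrt_le_sqrt hcs'
      _ = Real.sqrt n * lam1 ^ h := Real.sqrt_sq hR
  refine ⟨?_, hl1⟩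
  rw [tendsto_pi_nhds]
  intro i
  have hb : ∀ h : ℕ, |π h i - 1 / (n : ℝ)| ≤ Real.sqrt n * lam1 ^ h := fun h =>
    (Finset.single_le_sum (fun j (_ : j ∈ Finset.univ) => abs_nonneg (π h j - 1 / (n : ℝ)))
      (Finset.mem_univ i)).trans (hl1 h)
  have hone : Tendsto (fun h : ℕ => Real.sqrt n * lam1 ^ h) atTop (nhds 0) := by
    have := (tendsto_pow_atTop_nhds_zero_of_lt_one hlam_nonneg hlam_lt).const_mul
      (Real.sqrt n)
    simpa using this
  have hzero' : Tendsto (fun h : ℕ => π h i - 1 / (n : ℝ)) atTop (nhds 0) :=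
    squeeze_zero_norm (fun h => by simpa [Real.norm_eq_abs] using hb h) hone
  have := hzero'.add_const (1 / (n : ℝ))
  simpa using this
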